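/- Let k be a positive integer and a, b complex numbers with b ≠ 0 and a ≠ b. Suppose g is a nonconstant entire function of order at most one such that g^{(k)} never equals b, and g(z) = 0 if and only if g^{(k)}(z) = a. Then no such g exists (i.e., the hypotheses are contradictory). -/

import Mathlib

open Metric Set Filter MeasureTheory intervalIntegral


noncomputable def msq (x : ℝ) : ℝ := x * Real.sqrt x

lemma msq_nonneg {x : ℝ} (hx : 0 ≤ x) : 0 ≤ msq x :=
  mul_nonneg hx (Real.sqrt_nonneg x)

lemma msq_mono {x y : ℝ} (hx : 0 ≤ x) (hxy : x ≤ y) : msq x ≤ msq y :=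
  mul_le_mul hxy (Real.sqrt_le_sqrt hxy) (Real.sqrt_nonneg x) (le_trans hx hxy)

lemma one_le_msq {x : ℝ} (hx : 1 ≤ x) : 1 ≤ msq x := by
  have h := msq_mono (by norm_num : (0:ℝ) ≤ 1) hx
  simpa [msq, Real.sqrt_one] using h

lemma rpow_three_halves (x : ℝ) (hx : 0 ≤ x) : x ^ ((3:ℝ)/2) = msq x := by
  rcases eq_or_lt_of_le hx with h | h
  · simp [msq, ← h, Real.zero_rpow (by norm_num : ((3:ℝ)/2) ≠ 0)]
  · rw [show ((3:ℝ)/2) = 1 + 1/2 by norm_num, Real.rpow_add h, Real.rpow_one,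
      ← Real.sqrt_eq_rpow, msq]

/-- Schwarz-lemma based derivative estimate. -/
lemma deriv_bound {u : ℂ → ℂ} (hu : Differentiable ℂ u) (z : ℂ) {R B : ℝ} (hR : 0 < R)
    (hB : ∀ w ∈ ball z R, ‖u w‖ ≤ B) : ‖deriv u z‖ ≤ (2 * B + 1) / R := by
  have hzB : ‖u z‖ ≤ B := hB z (mem_ball_self hR)
  have hB0 : 0 ≤ B := le_trans (norm_nonneg _) hzB
  refine Complex.norm_deriv_le_div_of_mapsTo_ball hu.differentiableOn ?_ hR
  intro w hw
  have := hB w hw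
  simp only [mem_closedBall, dist_eq_norm]
  have h2 : ‖u w - u z‖ ≤ 2 * B := le_trans (norm_sub_le _ _) (by linarith)
  linarith


/-- Every entire function has a primitive. -/
lemma exists_primitive (f : ℂ → ℂ) (hf : Differentiable ℂ f) :
    ∃ F : ℂ → ℂ, ∀ z, HasDerivAt F (f z) z := by
  have hderiv : Differentiable ℂ (deriv f) := by
    have h1 : AnalyticOnNhd ℂ f univ := hf.differentiableOn.analyticOnNhd isOpen_univ
    have h2 : AnalyticOnNhd ℂ (deriv f) univ := h1.deriv
    exact fun z => (h2 z (mem_univ z)).differentiableAt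
  refine ⟨fun z => ∫ t in (0:ℝ)..1, z * f (t * z), fun z₀ => ?_⟩
  -- the pointwise derivative in x of x * f (t x)
  set c : ℂ → ℝ → ℂ := fun x t => f (↑t * x) + x * (deriv f (↑t * x) * ↑t) with hc
  have hdiff : ∀ (t : ℝ) (x : ℂ), HasDerivAt (fun x : ℂ => x * f (↑t * x)) (c x t) x := by
    intro t x
    have h1 : HasDerivAt (fun x : ℂ => f (↑t * x)) (deriv f (↑t * x) * ↑t) x := by
      have := ((hf (↑t * x)).hasDerivAt).comp x ((hasDerivAt_id x).const_mul (↑t : ℂ))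
      simp at this; exact this
    have := (hasDerivAt_id x).mul h1
    simp at this; exact this
  -- bound on the derivative near z₀
  obtain ⟨M, hM⟩ : ∃ M : ℝ, ∀ w : ℂ, ‖w‖ ≤ ‖z₀‖ + 1 → ‖f w‖ ≤ M ∧ ‖deriv f w‖ ≤ M := by
    have hcf : ContinuousOn (fun w => max ‖f w‖ ‖deriv f w‖) (closedBall 0 (‖z₀‖ + 1)) :=
      (hf.continuous.norm.max hderiv.continuous.norm).continuousOn
    obtain ⟨M, hM⟩ := (isCompact_closedBall (0:ℂ) (‖z₀‖+1)).exists_bound_of_continuousOn hcf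
    refine ⟨M, fun w hw => ?_⟩
    have hmem : w ∈ closedBall (0:ℂ) (‖z₀‖+1) := by simpa [dist_eq_norm] using hw
    have := hM w hmem
    rw [Real.norm_eq_abs] at this
    constructor
    · exact le_trans (le_max_left _ _) (le_trans (le_abs_self _) this)
    · exact le_trans (le_max_right _ _) (le_trans (le_abs_self _) this)
  have hcontF : ∀ x : ℂ, Continuous (fun t : ℝ => x * f (↑t * x)) := by
    intro x
    have := hf.continuous
    fun_prop
  have hcontc : Continuous (fun t : ℝ => c z₀ t) := by
    simp only [hc]
    have := hf.continuous
    have := hderiv.continuous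
    fun_prop
  have key := intervalIntegral.hasDerivAt_integral_of_dominated_loc_of_deriv_le
    (F := fun x t => x * f (↑t * x)) (F' := c) (x₀ := z₀) (a := 0) (b := 1)
    (μ := volume) (bound := fun _ => M + (‖z₀‖ + 1) * (M * 1)) (Metric.ball_mem_nhds z₀ one_pos)
    (Filter.Eventually.of_forall fun x => (hcontF x).aestronglyMeasurable)
    ((hcontF z₀).intervalIntegrable 0 1)
    (hcontc.aestronglyMeasurable)
    (Filter.Eventually.of_forall fun t ht => fun x hx => ?_)
    (intervalIntegrable_const)
    (Filter.Eventually.of_forall fun t _ => fun x _ => hdiff t x)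
  · obtain ⟨-, hkey⟩ := key
    -- now compute the integral ∫ c z₀ t dt = f z₀ by FTC
    have hFTC : (∫ t in (0:ℝ)..1, c z₀ t) = f z₀ := by
      have hder : ∀ t ∈ Set.uIcc (0:ℝ) 1,
          HasDerivAt (fun s : ℝ => (↑s : ℂ) * f (↑s * z₀)) (c z₀ t) t := by
        intro t _
        have hC : HasDerivAt (fun w : ℂ => w * f (w * z₀)) (1 * f (↑t * z₀) + ↑t * (deriv f (↑t * z₀) * z₀)) ↑t := by
          have h1 : HasDerivAt (fun w : ℂ => f (w * z₀)) (deriv f (↑t * z₀) * z₀) ↑t := by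
            have := ((hf (↑t * z₀)).hasDerivAt).comp (↑t : ℂ) ((hasDerivAt_id (↑t:ℂ)).mul_const z₀)
            simp at this; exact this
          exact (hasDerivAt_id' (↑t:ℂ)).mul h1
        have := hC.comp_ofReal
        convert this using 1
        simp only [hc]
        ring
      have hint : IntervalIntegrable (c z₀) volume 0 1 := hcontc.intervalIntegrable 0 1
      have := intervalIntegral.integral_eq_sub_of_hasDerivAt hder hint
      simpa using this
    rw [hFTC] at hkey
    exact hkey
  · -- the bound
    have ht' : 0 < t ∧ t ≤ 1 := by
      rcases Set.mem_uIoc.mp ht with h | h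
      · exact h
      · linarith [h.1, h.2]
    have htm : |t| ≤ 1 := abs_le.mpr ⟨by linarith [ht'.1], ht'.2⟩
    have hxn : ‖x‖ ≤ ‖z₀‖ + 1 := by
      have := mem_ball_iff_norm.mp hx
      have h2 : ‖x‖ - ‖z₀‖ ≤ ‖x - z₀‖ := by
        simpa using norm_sub_norm_le x z₀
      linarith
    have htx : ‖(↑t : ℂ) * x‖ ≤ ‖z₀‖ + 1 := by
      rw [norm_mul, Complex.norm_real, Real.norm_eq_abs]
      calc |t| * ‖x‖ ≤ 1 * (‖z₀‖ + 1) :=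
        mul_le_mul htm hxn (norm_nonneg _) one_pos.le
      _ = ‖z₀‖ + 1 := one_mul _
    obtain ⟨hf1, hf2⟩ := hM _ htx
    calc ‖c x t‖ ≤ ‖f (↑t * x)‖ + ‖x * (deriv f (↑t * x) * ↑t)‖ := norm_add_le _ _
      _ ≤ M + (‖z₀‖ + 1) * (M * 1) := by
          refine add_le_add hf1 ?_
          rw [norm_mul, norm_mul, Complex.norm_real, Real.norm_eq_abs]
          have h0M : (0:ℝ) ≤ M := le_trans (norm_nonneg _) hf1
          exact mul_le_mul hxn (mul_le_mul hf2 htm (abs_nonneg _) h0M)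
            (mul_nonneg (norm_nonneg _) (abs_nonneg _)) (by linarith [norm_nonneg z₀])


/-- Entire nonvanishing functions have entire logarithms. -/
lemma exists_log (f : ℂ → ℂ) (hf : Differentiable ℂ f) (hne : ∀ z, f z ≠ 0) :
    ∃ h : ℂ → ℂ, Differentiable ℂ h ∧ ∀ z, f z = Complex.exp (h z) := by
  have hderiv : Differentiable ℂ (deriv f) := by
    have h1 : AnalyticOnNhd ℂ f univ := hf.differentiableOn.analyticOnNhd isOpen_univ
    exact fun z => (h1.deriv z (mem_univ z)).differentiableAt
  obtain ⟨H, hH⟩ := exists_primitive (fun z => deriv f z / f z) (hderiv.div hf hne)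
  have hHd : Differentiable ℂ H := fun z => (hH z).differentiableAt
  have hconst : ∀ z, f z * Complex.exp (-H z) = f 0 * Complex.exp (-H 0) := by
    have hG : ∀ z, HasDerivAt (fun w => f w * Complex.exp (-H w)) 0 z := by
      intro z
      have h1 : HasDerivAt (fun w => Complex.exp (-H w))
          (Complex.exp (-H z) * -(deriv f z / f z)) z := ((hH z).neg).cexp
      have h2 := ((hf z).hasDerivAt).mul h1
      have h3 : deriv f z * Complex.exp (-H z) + f z * (Complex.exp (-H z) * -(deriv f z / f z)) = 0 := by
        linear_combination (-Complex.exp (-H z)) * (mul_div_cancel₀ (deriv f z) (hne z))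
      rw [h3] at h2
      exact h2
    intro z
    have := is_const_of_deriv_eq_zero (𝕜 := ℂ)
      (fun w => ((hf w).hasDerivAt.mul (((hH w).neg).cexp)).differentiableAt)
      (fun w => (hG w).deriv) z 0
    exact this
  refine ⟨fun z => H z - H 0 + Complex.log (f 0), hHd.sub_const _ |>.add_const _, fun z => ?_⟩
  calc f z = f z * Complex.exp (-H z) * Complex.exp (H z) := by
        rw [mul_assoc, ← Complex.exp_add]; simp
    _ = f 0 * Complex.exp (-H 0) * Complex.exp (H z) := by rw [hconst z]
    _ = Complex.exp (H z - H 0 + Complex.log (f 0)) := by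
        rw [Complex.exp_add, Complex.exp_sub, Complex.exp_neg, Complex.exp_log (hne 0)]
        field_simp


/-- Borel–Carathéodory type bound via the Schwarz lemma. -/
lemma borel_caratheodory {φ : ℂ → ℂ} (hφ : Differentiable ℂ φ) (hφ0 : φ 0 = 0)
    {M R : ℝ} (hM : 0 < M) (hR : 0 < R)
    (hRe : ∀ w ∈ ball (0:ℂ) R, (φ w).re < M) :
    ∀ z : ℂ, ‖z‖ ≤ R / 2 → ‖φ z‖ ≤ 2 * M := by
  set M2 : ℂ := ((2 * M : ℝ) : ℂ) with hM2
  set F : ℂ → ℂ := fun w => φ w / (M2 - φ w) with hF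
  have hden : ∀ w ∈ ball (0:ℂ) R, (M2 - φ w) ≠ 0 := by
    intro w hw h
    have h2 : (M2 - φ w).re = 2 * M - (φ w).re := by
      simp [hM2, Complex.sub_re, Complex.ofReal_re]
    rw [h] at h2
    simp only [Complex.zero_re] at h2
    linarith [hRe w hw]
  have hFd : DifferentiableOn ℂ F (ball 0 R) :=
    hφ.differentiableOn.div ((differentiable_const _).sub hφ).differentiableOn hden
  have hF0 : F 0 = 0 := by simp [hF, hφ0]
  have hmaps : MapsTo F (ball 0 R) (ball (F 0) 1) := by
    intro w hw
    rw [hF0, mem_ball, dist_eq_norm, sub_zero]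
    have hd := hden w hw
    rw [hF]
    simp only
    rw [norm_div, div_lt_one (norm_pos_iff.mpr hd)]
    have hsq : Complex.normSq (φ w) < Complex.normSq (M2 - φ w) := by
      have h1 := hRe w hw
      simp only [Complex.normSq_apply, Complex.sub_re, Complex.sub_im, hM2,
        Complex.ofReal_re, Complex.ofReal_im]
      nlinarith [hM, h1]
    have := Real.sqrt_lt_sqrt (Complex.normSq_nonneg _) hsq
    simpa [Complex.norm_def] using this
  intro z hz
  have hzball : z ∈ ball (0:ℂ) R := by
    rw [mem_ball, dist_eq_norm, sub_zero]
    linarith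
  have hschwarz := Complex.dist_le_div_mul_dist_of_mapsTo_ball hFd (hmaps.mono_right ball_subset_closedBall) hzball
  rw [hF0, dist_eq_norm, sub_zero, dist_eq_norm, sub_zero] at hschwarz
  have hFz : ‖F z‖ ≤ 1 / 2 := by
    calc ‖F z‖ ≤ 1 / R * ‖z‖ := hschwarz
      _ ≤ 1 / R * (R / 2) := by
          apply mul_le_mul_of_nonneg_left hz (by positivity)
      _ = 1 / 2 := by field_simp
  -- recover φ from F
  have hid : φ z * (1 + F z) = M2 * F z := by
    rw [hF]
    field_simp [hden z hzball]
    ring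
  have h1F : (1:ℝ) / 2 ≤ ‖1 + F z‖ := by
    have h3 := norm_sub_le (1 + F z) (F z)
    simp only [add_sub_cancel_right] at h3
    have hn1 : ‖(1:ℂ)‖ = 1 := by simp
    rw [hn1] at h3
    linarith
  have hnM : ‖M2‖ = 2 * M := by
    rw [hM2, Complex.norm_real, Real.norm_eq_abs, abs_of_pos (by linarith)]
  calc ‖φ z‖ = ‖φ z‖ * 1 := (mul_one _).symm
    _ ≤ ‖φ z‖ * (2 * ‖1 + F z‖) := by
        apply mul_le_mul_of_nonneg_left _ (norm_nonneg _)
        linarith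
    _ = 2 * (‖φ z‖ * ‖1 + F z‖) := by ring
    _ = 2 * (‖M2‖ * ‖F z‖) := by rw [← norm_mul, hid, norm_mul]
    _ ≤ 2 * ((2 * M) * (1/2)) := by
        rw [hnM]
        apply mul_le_mul_of_nonneg_left _ (by norm_num)
        apply mul_le_mul_of_nonneg_left hFz (by linarith)
    _ = 2 * M := by ring


lemma affine_of_growth {h : ℂ → ℂ} (hd : Differentiable ℂ h) {D : ℝ} (hD : 1 ≤ D)
    (hb : ∀ z, ‖h z‖ ≤ D * msq (‖z‖ + D)) : ∃ u v : ℂ, ∀ z, h z = u + v * z := by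
  have hD0 : 0 < D := lt_of_lt_of_le one_pos hD
  have han : AnalyticOnNhd ℂ h univ := hd.differentiableOn.analyticOnNhd isOpen_univ
  have hd1 : Differentiable ℂ (deriv h) := fun z => (han.deriv z (mem_univ z)).differentiableAt
  have hd2 : Differentiable ℂ (deriv (deriv h)) :=
    fun z => ((han.deriv.deriv) z (mem_univ z)).differentiableAt
  -- first derivative bound
  have hb1 : ∀ (z : ℂ) (R : ℝ), 0 < R →
      ‖deriv h z‖ ≤ (2 * (D * msq (‖z‖ + R + D)) + 1) / R := by
    intro z R hR
    refine deriv_bound hd z hR (fun w hw => ?_)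
    refine (hb w).trans ?_
    have hwz : ‖w‖ ≤ ‖z‖ + R := by
      have h1 := mem_ball_iff_norm.mp hw
      have h2 : ‖w‖ - ‖z‖ ≤ ‖w - z‖ := by simpa using norm_sub_norm_le w z
      linarith
    exact mul_le_mul_of_nonneg_left
      (msq_mono (by positivity) (by linarith)) hD0.le
  -- second derivative vanishes
  have hzero : ∀ w : ℂ, deriv (deriv h) w = 0 := by
    intro w
    have key : ∀ R : ℝ, ‖w‖ + 1 + D ≤ R →
        ‖deriv (deriv h) w‖ ≤ (24 * D + 3) / Real.sqrt R := by
      intro R hTR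
      have hR1 : (1:ℝ) ≤ R := by linarith [norm_nonneg w]
      have hR : (0:ℝ) < R := by linarith
      have hB : ∀ z ∈ ball w R, ‖deriv h z‖ ≤ 12 * D * Real.sqrt R + 1 := by
        intro z hz
        have hzw : ‖z‖ ≤ ‖w‖ + R := by
          have h1 := mem_ball_iff_norm.mp hz
          have h2 : ‖z‖ - ‖w‖ ≤ ‖z - w‖ := by simpa using norm_sub_norm_le z w
          linarith
        have h3 := hb1 z R hR
        have hmsq : msq (‖z‖ + R + D) ≤ 6 * (R * Real.sqrt R) := by
          have h4 : ‖z‖ + R + D ≤ 3 * R := by linarith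
          have h5 : msq (‖z‖ + R + D) ≤ msq (3 * R) := msq_mono (by positivity) h4
          have h6 : msq (3 * R) = 3 * R * Real.sqrt (3 * R) := rfl
          have h7 : Real.sqrt (3 * R) ≤ 2 * Real.sqrt R := by
            rw [show (3:ℝ) * R = 3 * R from rfl]
            calc Real.sqrt (3 * R) ≤ Real.sqrt (4 * R) :=
                  Real.sqrt_le_sqrt (by linarith)
              _ = 2 * Real.sqrt R := by
                  rw [show (4:ℝ) * R = 2^2 * R by ring, Real.sqrt_mul (by positivity),
                    Real.sqrt_sq (by norm_num)]
          calc msq (‖z‖ + R + D) ≤ 3 * R * Real.sqrt (3 * R) := h6 ▸ h5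
            _ ≤ 3 * R * (2 * Real.sqrt R) := by
                apply mul_le_mul_of_nonneg_left h7 (by positivity)
            _ = 6 * (R * Real.sqrt R) := by ring
        calc ‖deriv h z‖ ≤ (2 * (D * msq (‖z‖ + R + D)) + 1) / R := h3
          _ ≤ (2 * (D * (6 * (R * Real.sqrt R))) + 1) / R := by gcongr
          _ = 12 * D * Real.sqrt R + 1 / R := by
              field_simp
              ring
          _ ≤ 12 * D * Real.sqrt R + 1 := by
              have : 1 / R ≤ 1 := by
                rw [div_le_one hR]; exact hR1
              linarith
      have h8 := deriv_bound hd1 w hR hB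
      have hsR : (0:ℝ) < Real.sqrt R := Real.sqrt_pos.mpr hR
      have hss : Real.sqrt R * Real.sqrt R = R := Real.mul_self_sqrt hR.le
      have hsR1 : (1:ℝ) ≤ Real.sqrt R := by
        rw [show (1:ℝ) = Real.sqrt 1 by simp]
        exact Real.sqrt_le_sqrt hR1
      calc ‖deriv (deriv h) w‖ ≤ (2 * (12 * D * Real.sqrt R + 1) + 1) / R := h8
        _ = (24 * D * Real.sqrt R + 3) / R := by ring_nf
        _ ≤ (24 * D * Real.sqrt R + 3 * Real.sqrt R) / R := by gcongr; linarith
        _ = (24 * D + 3) / Real.sqrt R := by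
            rw [div_eq_div_iff (ne_of_gt hR) (ne_of_gt hsR)]
            nlinarith [hss]
    have hsqrtT : Tendsto Real.sqrt atTop atTop := by
      apply tendsto_atTop_atTop.mpr
      intro b
      refine ⟨(max b 0)^2, fun x hx => ?_⟩
      calc b ≤ max b 0 := le_max_left _ _
        _ = Real.sqrt ((max b 0)^2) := by
            rw [Real.sqrt_sq (le_max_right _ _)]
        _ ≤ Real.sqrt x := Real.sqrt_le_sqrt hx
    have htend : Tendsto (fun R : ℝ => (24 * D + 3) / Real.sqrt R) atTop (nhds 0) :=
      Tendsto.div_atTop tendsto_const_nhds hsqrtT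
    have hev : ∀ᶠ R in atTop, ‖deriv (deriv h) w‖ ≤ (24 * D + 3) / Real.sqrt R :=
      (eventually_ge_atTop (‖w‖ + 1 + D)).mono (fun R hR => key R hR)
    have := ge_of_tendsto htend hev
    simpa using norm_le_zero_iff.mp this
  -- deriv h is constant
  set v := deriv h 0 with hv
  have hconst : ∀ z, deriv h z = v :=
    fun z => is_const_of_deriv_eq_zero (𝕜 := ℂ) hd1 hzero z 0
  refine ⟨h 0, v, fun z => ?_⟩
  have hψ : ∀ z, HasDerivAt (fun w => h w - v * w) 0 z := by
    intro z
    have h2 : HasDerivAt (fun w : ℂ => v * w) v z := by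
      simpa using (hasDerivAt_id z).const_mul v
    have h3 := (hd z).hasDerivAt.sub h2
    rw [hconst z, sub_self] at h3
    exact h3
  have hc := is_const_of_deriv_eq_zero (𝕜 := ℂ)
    (fun z => (hψ z).differentiableAt) (fun z => (hψ z).deriv) z 0
  simp only [mul_zero, sub_zero] at hc
  linear_combination hc


lemma msq_four_mul {x : ℝ} (hx : 0 ≤ x) : msq (4 * x) = 8 * msq x := by
  unfold msq
  rw [show (4:ℝ) * x = 2^2 * x by ring, Real.sqrt_mul (by positivity),
    Real.sqrt_sq (by norm_num)]
  ring

lemma affine_of_re_growth {h : ℂ → ℂ} (hd : Differentiable ℂ h) (C s : ℝ) (hs : 0 ≤ s)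
    (hRe : ∀ z : ℂ, (h z).re ≤ C + msq (‖z‖ + s)) : ∃ u v : ℂ, ∀ z, h z = u + v * z := by
  set K : ℝ := |C| + |(h 0).re| + 1 with hK
  have hK0 : 0 < K := by positivity
  set φ : ℂ → ℂ := fun z => h z - h 0 with hφ
  have hφd : Differentiable ℂ φ := hd.sub_const _
  have hφ0 : φ 0 = 0 := sub_self _
  have hbound : ∀ z : ℂ, ‖φ z‖ ≤ 2 * (K + msq (2 * ‖z‖ + 2 + s)) := by
    intro z
    set R : ℝ := 2 * ‖z‖ + 2 with hR
    have hRpos : 0 < R := by positivity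
    set M : ℝ := K + msq (R + s) with hM
    have hMpos : 0 < M := by
      have := msq_nonneg (x := R + s) (by positivity)
      linarith
    have hReφ : ∀ w ∈ ball (0:ℂ) R, (φ w).re < M := by
      intro w hw
      have hwn : ‖w‖ < R := by simpa [dist_eq_norm] using mem_ball_iff_norm.mp hw
      have h1 : (φ w).re = (h w).re - (h 0).re := by simp [hφ]
      have h2 := hRe w
      have h3 : msq (‖w‖ + s) ≤ msq (R + s) := msq_mono (by positivity) (by linarith)
      rw [h1, hM, hK]
      have h4 : (h w).re ≤ |C| + msq (R + s) := by
        calc (h w).re ≤ C + msq (‖w‖ + s) := h2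
          _ ≤ |C| + msq (R + s) := add_le_add (le_abs_self C) h3
      have h5 : -(h 0).re ≤ |(h 0).re| := neg_le_abs _
      linarith
    have := borel_caratheodory hφd hφ0 hMpos hRpos hReφ z (by rw [hR]; linarith)
    simpa [hM, hR] using this
  set D : ℝ := ‖h 0‖ + 2 * K + 17 + s with hD
  have hD1 : 1 ≤ D := by
    have := norm_nonneg (h 0)
    rw [hD]; linarith
  refine affine_of_growth hd hD1 (fun z => ?_)
  have h6 : ‖h z‖ ≤ ‖h 0‖ + ‖φ z‖ := by
    have : h z = φ z + h 0 := by simp [hφ]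
    rw [this]
    exact (norm_add_le _ _).trans (by linarith [le_refl (‖φ z‖ + ‖h 0‖)])
  have h7 : msq (2 * ‖z‖ + 2 + s) ≤ 8 * msq (‖z‖ + D) := by
    have ha : 2 * ‖z‖ + 2 + s ≤ 4 * (‖z‖ + D) := by
      have : 0 ≤ K := hK0.le
      have := norm_nonneg (h 0)
      have := norm_nonneg z
      rw [hD]
      linarith
    calc msq (2 * ‖z‖ + 2 + s) ≤ msq (4 * (‖z‖ + D)) := msq_mono (by positivity) ha
      _ = 8 * msq (‖z‖ + D) := msq_four_mul (by positivity)
  have h8 : (1:ℝ) ≤ msq (‖z‖ + D) := one_le_msq (by linarith [norm_nonneg z])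
  have h9 : ‖h 0‖ + 2 * K ≤ (‖h 0‖ + 2 * K) * msq (‖z‖ + D) := by
    nlinarith [norm_nonneg (h 0), hK0]
  calc ‖h z‖ ≤ ‖h 0‖ + ‖φ z‖ := h6
    _ ≤ ‖h 0‖ + 2 * (K + msq (2 * ‖z‖ + 2 + s)) := by linarith [hbound z]
    _ ≤ ‖h 0‖ + 2 * K + 16 * msq (‖z‖ + D) := by linarith
    _ ≤ (‖h 0‖ + 2 * K) * msq (‖z‖ + D) + 17 * msq (‖z‖ + D) := by linarith
    _ ≤ D * msq (‖z‖ + D) := by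
        have : (0:ℝ) ≤ msq (‖z‖ + D) := by linarith
        rw [hD]
        nlinarith


lemma iteratedDeriv_exp_affine (u v : ℂ) (n : ℕ) :
    iteratedDeriv n (fun z => Complex.exp (u + v * z)) =
      fun z => v ^ n * Complex.exp (u + v * z) := by
  induction n with
  | zero => simp
  | succ n ih =>
    rw [iteratedDeriv_succ, ih]
    funext z
    have h1 : HasDerivAt (fun z : ℂ => v ^ n * Complex.exp (u + v * z))
        (v ^ n * (Complex.exp (u + v * z) * v)) z := by
      have h0 : HasDerivAt (fun z : ℂ => u + v * z) v z := by
        simpa using ((hasDerivAt_id z).const_mul v).const_add u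
      exact (h0.cexp).const_mul _
    rw [h1.deriv]
    ring

lemma growth_iteratedDeriv {g : ℂ → ℂ} (hg : Differentiable ℂ g) {C : ℝ} (hC : 0 < C)
    (hg0 : ∀ z : ℂ, ‖g z‖ ≤ C * Real.exp (msq ‖z‖)) (j : ℕ) :
    ∃ Cj : ℝ, 0 < Cj ∧ ∀ z : ℂ, ‖iteratedDeriv j g z‖ ≤ Cj * Real.exp (msq (‖z‖ + j)) := by
  induction j with
  | zero =>
    exact ⟨C, hC, fun z => by simpa using hg0 z⟩
  | succ j ih =>
    obtain ⟨Cj, hCj, hbd⟩ := ih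
    refine ⟨2 * Cj + 1, by linarith, fun z => ?_⟩
    have hdiffj : Differentiable ℂ (iteratedDeriv j g) := by
      have : ContDiff ℂ ((j:ℕ∞) + 1) g := hg.contDiff
      exact this.differentiable_iteratedDeriv j
        (by exact_mod_cast Nat.lt_succ_self j)
    have hball : ∀ w ∈ ball z 1, ‖iteratedDeriv j g w‖ ≤ Cj * Real.exp (msq (‖z‖ + (j+1))) := by
      intro w hw
      have hwz : ‖w‖ ≤ ‖z‖ + 1 := by
        have h1 := mem_ball_iff_norm.mp hw
        have h2 : ‖w‖ - ‖z‖ ≤ ‖w - z‖ := by simpa using norm_sub_norm_le w z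
        linarith
      refine (hbd w).trans ?_
      have : msq (‖w‖ + j) ≤ msq (‖z‖ + (j+1)) :=
        msq_mono (by positivity) (by push_cast; linarith)
      exact mul_le_mul_of_nonneg_left (Real.exp_le_exp.mpr this) hCj.le
    have hkey := deriv_bound hdiffj z one_pos hball
    rw [iteratedDeriv_succ]
    have hexp1 : (1:ℝ) ≤ Real.exp (msq (‖z‖ + (j+1))) := by
      rw [show (1:ℝ) = Real.exp 0 by simp]
      exact Real.exp_le_exp.mpr (msq_nonneg (by positivity))
    calc ‖deriv (iteratedDeriv j g) z‖
        ≤ (2 * (Cj * Real.exp (msq (‖z‖ + (j+1)))) + 1) / 1 := hkey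
      _ = 2 * Cj * Real.exp (msq (‖z‖ + (j+1))) + 1 := by ring
      _ ≤ 2 * Cj * Real.exp (msq (‖z‖ + (j+1))) + 1 * Real.exp (msq (‖z‖ + (j+1))) := by
          nlinarith
      _ = (2 * Cj + 1) * Real.exp (msq (‖z‖ + ((j:ℝ)+1))) := by ring
      _ = (2 * Cj + 1) * Real.exp (msq (‖z‖ + ((j+1 : ℕ):ℝ))) := by push_cast; ring_nf


lemma poly_of_iteratedDeriv_const : ∀ (k : ℕ) (F : ℂ → ℂ), Differentiable ℂ F → ∀ (b : ℂ),
    (∀ z, iteratedDeriv k F z = b) →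
    ∃ P : Polynomial ℂ, (∀ z, F z = P.eval z) ∧ P.coeff k = b / (k.factorial : ℂ) := by
  intro k
  induction k with
  | zero =>
    intro F _ b hF
    refine ⟨Polynomial.C b, fun z => ?_, by simp⟩
    have := hF z
    simp only [iteratedDeriv_zero] at this
    simpa using this
  | succ k ih =>
    intro F hF b hFk
    have hderiv : Differentiable ℂ (deriv F) := by
      have h1 : AnalyticOnNhd ℂ F Set.univ := hF.differentiableOn.analyticOnNhd isOpen_univ
      exact fun z => (h1.deriv z (Set.mem_univ z)).differentiableAt
    have hFk' : ∀ z, iteratedDeriv k (deriv F) z = b := by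
      intro z
      rw [← iteratedDeriv_succ']
      exact hFk z
    obtain ⟨P₁, hP₁, hcoeff⟩ := ih (deriv F) hderiv b hFk'
    set n := P₁.natDegree + 1 with hn
    set Q : Polynomial ℂ :=
      (∑ i ∈ Finset.range n, Polynomial.C (P₁.coeff i / (i+1 : ℂ)) * Polynomial.X ^ (i+1))
        + Polynomial.C (F 0) with hQ
    have hQderiv : Q.derivative = P₁ := by
      rw [hQ]
      rw [Polynomial.derivative_add, Polynomial.derivative_C, add_zero,
        Polynomial.derivative_sum]
      have : ∀ i ∈ Finset.range n,
          Polynomial.derivative (Polynomial.C (P₁.coeff i / (i+1 : ℂ)) * Polynomial.X ^ (i+1))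
            = Polynomial.C (P₁.coeff i) * Polynomial.X ^ i := by
        intro i _
        rw [Polynomial.derivative_C_mul, Polynomial.derivative_X_pow]
        rw [← mul_assoc]
        congr 1
        rw [← Polynomial.C_mul]
        congr 1
        have hne : ((i:ℂ) + 1) ≠ 0 := Nat.cast_add_one_ne_zero i
        rw [show ((i+1:ℕ):ℂ) = (i:ℂ)+1 by push_cast; ring, div_mul_cancel₀ _ hne]
      rw [Finset.sum_congr rfl this]
      conv_rhs => rw [P₁.as_sum_range' n (by omega)]
      apply Finset.sum_congr rfl
      intro i _
      rw [Polynomial.C_mul_X_pow_eq_monomial]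
    have heval : ∀ z, F z = Q.eval z := by
      have hQ0 : Q.eval 0 = F 0 := by
        rw [hQ]
        simp [Polynomial.eval_finset_sum]
      have hder0 : ∀ z : ℂ, HasDerivAt (fun w => F w - Q.eval w) 0 z := by
        intro z
        have h1 : HasDerivAt (fun w : ℂ => Q.eval w) (P₁.eval z) z := by
          have h0 := Polynomial.hasDerivAt Q z
          rwa [hQderiv] at h0
        have h2 := (hF z).hasDerivAt.sub h1
        have h3 : deriv F z = P₁.eval z := hP₁ z
        rwa [h3, sub_self] at h2
      intro z
      have := is_const_of_deriv_eq_zero (𝕜 := ℂ)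
        (fun w => (hder0 w).differentiableAt) (fun w => (hder0 w).deriv) z 0
      rw [hQ0] at this
      linear_combination this
    refine ⟨Q, heval, ?_⟩
    have hcq : Q.coeff (k+1) = P₁.coeff k / ((k:ℂ)+1) := by
      have h1 : Q.coeff (k+1)
          = ∑ i ∈ Finset.range n, (if i = k then P₁.coeff i / ((i:ℂ)+1) else 0) := by
        rw [hQ, Polynomial.coeff_add, Polynomial.coeff_C, if_neg (Nat.succ_ne_zero k), add_zero,
          Polynomial.finset_sum_coeff]
        apply Finset.sum_congr rfl
        intro i _
        rw [Polynomial.coeff_C_mul, Polynomial.coeff_X_pow]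
        by_cases h : i = k
        · subst h; simp
        · have h' : ¬ (k + 1 = i + 1) := by omega
          simp [h, h', Ne.symm h]
      rw [h1, Finset.sum_ite_eq' (Finset.range n) k (fun i => P₁.coeff i / ((i:ℂ)+1))]
      by_cases hkn : k ∈ Finset.range n
      · simp [hkn]
      · rw [if_neg hkn]
        have hklt : P₁.natDegree < k := by
          have := Finset.mem_range.not.mp hkn
          omega
        rw [Polynomial.coeff_eq_zero_of_natDegree_lt hklt, zero_div]
    rw [hcq, hcoeff]
    rw [div_div]
    congr 1
    rw [Nat.factorial_succ]
    push_cast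
    ring


lemma iteratedDeriv_sub' {k : ℕ} {f₁ f₂ : ℂ → ℂ} (h1 : Differentiable ℂ f₁)
    (h2 : Differentiable ℂ f₂) (z : ℂ) :
    iteratedDeriv k (fun w => f₁ w - f₂ w) z = iteratedDeriv k f₁ z - iteratedDeriv k f₂ z := by
  have := iteratedDerivWithin_sub (𝕜 := ℂ) (x := z) (s := Set.univ) (n := k)
    (Set.mem_univ z) uniqueDiffOn_univ
    (h1.contDiff.contDiffWithinAt) (h2.contDiff.contDiffWithinAt)
  simpa [iteratedDerivWithin_univ, Pi.sub_def] using this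

/-- There is no nonconstant entire function `g` of order at most one such that
`g^{(k)}` omits `b` (with `b ≠ 0`, `a ≠ b`) and `g(z) = 0 ↔ g^{(k)}(z) = a`. -/
theorem stmt_2 (g : ℂ → ℂ) (k : ℕ) (hk : 1 ≤ k) (a b : ℂ) (hb : b ≠ 0) (hab : a ≠ b)
    (hg : Differentiable ℂ g) (hnc : ¬ ∃ c : ℂ, ∀ z, g z = c)
    (hord : ∀ ε : ℝ, 0 < ε → ∃ C : ℝ, 0 < C ∧ ∀ z : ℂ, ‖g z‖ ≤ C * Real.exp (‖z‖ ^ (1 + ε)))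
    (homit : ∀ z : ℂ, iteratedDeriv k g z ≠ b)
    (hshare : ∀ z : ℂ, g z = 0 ↔ iteratedDeriv k g z = a) :
    False := by
  obtain ⟨C, hC, hCb⟩ := hord (1/2) (by norm_num)
  have hgC : ∀ z : ℂ, ‖g z‖ ≤ C * Real.exp (msq ‖z‖) := by
    intro z
    have := hCb z
    rwa [show (1 + 1/2 : ℝ) = 3/2 by norm_num,
      rpow_three_halves _ (norm_nonneg z)] at this
  by_cases hzero : ∃ z₀, g z₀ = 0
  · -- Case B : g has a zero
    obtain ⟨z₀, hz₀⟩ := hzero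
    have hgkd : Differentiable ℂ (iteratedDeriv k g) := by
      have : ContDiff ℂ ((k:ℕ∞) + 1) g := hg.contDiff
      exact this.differentiable_iteratedDeriv k (by exact_mod_cast Nat.lt_succ_self k)
    obtain ⟨Ck, hCk, hCkb⟩ := growth_iteratedDeriv hg hC hgC k
    set f : ℂ → ℂ := fun z => iteratedDeriv k g z - b with hf
    have hfd : Differentiable ℂ f := hgkd.sub_const b
    have hfne : ∀ z, f z ≠ 0 := fun z => sub_ne_zero_of_ne (homit z)
    obtain ⟨h, hhd, hfh⟩ := exists_log f hfd hfne
    have hre : ∀ z : ℂ, (h z).re ≤ Real.log (Ck + ‖b‖) + msq (‖z‖ + k) := by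
      intro z
      have hfb : ‖f z‖ ≤ (Ck + ‖b‖) * Real.exp (msq (‖z‖ + k)) := by
        have h1 : ‖f z‖ ≤ ‖iteratedDeriv k g z‖ + ‖b‖ := norm_sub_le _ _
        have h2 := hCkb z
        have hexp1 : (1:ℝ) ≤ Real.exp (msq (‖z‖ + k)) := by
          rw [show (1:ℝ) = Real.exp 0 by simp]
          exact Real.exp_le_exp.mpr (msq_nonneg (by positivity))
        nlinarith [norm_nonneg b]
      have hnorm : Real.exp ((h z).re) = ‖f z‖ := by
        rw [hfh z, Complex.norm_exp]
      have hpos : (0:ℝ) < Ck + ‖b‖ := by positivity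
      have := Real.log_le_log (Real.exp_pos _) (hnorm ▸ hfb)
      rwa [Real.log_exp, Real.log_mul (ne_of_gt hpos) (Real.exp_ne_zero _),
        Real.log_exp] at this
    obtain ⟨u, v, huv⟩ := affine_of_re_growth hhd (Real.log (Ck + ‖b‖)) (k:ℝ)
      (by positivity) hre
    set A : ℂ := Complex.exp u with hA
    have hAne : A ≠ 0 := Complex.exp_ne_zero u
    have hgk : ∀ z : ℂ, iteratedDeriv k g z = b + A * Complex.exp (v * z) := by
      intro z
      have h1 : f z = A * Complex.exp (v * z) := by
        rw [hfh z, huv z, Complex.exp_add]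
      have : iteratedDeriv k g z - b = A * Complex.exp (v * z) := h1
      linear_combination this
    have hz₀a : b + A * Complex.exp (v * z₀) = a := by
      rw [← hgk z₀]
      exact (hshare z₀).mp hz₀
    by_cases hv : v = 0
    · -- g^{(k)} constant
      have hconsta : ∀ z, iteratedDeriv k g z = a := by
        intro z
        rw [hgk z, hv]
        rw [hv] at hz₀a
        simpa using hz₀a
      exact hnc ⟨0, fun z => (hshare z).mpr (hconsta z)⟩
    · -- v ≠ 0 : infinitely many zeros of a polynomial
      set c : ℂ := Complex.exp (v * z₀) with hc
      have hvk : (v:ℂ)^k ≠ 0 := pow_ne_zero _ hv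
      set w : ℂ := Complex.log (A / v^k) with hw
      have hexpw : Complex.exp w = A / v^k := Complex.exp_log (div_ne_zero hAne hvk)
      set Φ : ℂ → ℂ := fun z => g z - Complex.exp (w + v * z) with hΦ
      have hEd : Differentiable ℂ (fun z : ℂ => Complex.exp (w + v * z)) := by
        apply Complex.differentiable_exp.comp
        exact (differentiable_const w).add ((differentiable_const v).mul differentiable_id)
      have hΦd : Differentiable ℂ Φ := hg.sub hEd
      have hΦk : ∀ z, iteratedDeriv k Φ z = b := by
        intro z
        rw [hΦ]
        rw [iteratedDeriv_sub' hg hEd z, iteratedDeriv_exp_affine w v k, hgk z]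
        simp only [Complex.exp_add, hexpw]
        field_simp
        ring
      obtain ⟨P, hP, hPcoeff⟩ := poly_of_iteratedDeriv_const k Φ hΦd b hΦk
      set P' : Polynomial ℂ := P + Polynomial.C ((A / v^k) * c) with hP'
      have hP'coeff : P'.coeff k = b / (k.factorial : ℂ) := by
        rw [hP', Polynomial.coeff_add, Polynomial.coeff_C, if_neg (by omega), add_zero, hPcoeff]
      have hP'ne : P' ≠ 0 := by
        intro h0
        rw [h0, Polynomial.coeff_zero] at hP'coeff
        have h1 := hP'coeff.symm
        rw [div_eq_zero_iff] at h1
        rcases h1 with h1 | h1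
        · exact hb h1
        · exact Nat.cast_ne_zero.mpr (Nat.factorial_ne_zero k) h1
      -- roots
      set p : ℂ := 2 * (Real.pi : ℂ) * Complex.I / v with hp
      have hpne : p ≠ 0 := by
        rw [hp]
        apply div_ne_zero _ hv
        exact mul_ne_zero (mul_ne_zero two_ne_zero
          (Complex.ofReal_ne_zero.mpr Real.pi_ne_zero)) Complex.I_ne_zero
      have hroot : ∀ n : ℕ, P'.IsRoot (z₀ + n * p) := by
        intro n
        have hevp : Complex.exp (v * (z₀ + n * p)) = c := by
          have : v * (z₀ + n * p) = v * z₀ + n * (2 * (Real.pi:ℂ) * Complex.I) := by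
            rw [hp]; field_simp
          rw [this, (Complex.exp_periodic.nat_mul n) (v * z₀)]
        have hgkn : iteratedDeriv k g (z₀ + n * p) = a := by
          rw [hgk, hevp]
          exact hz₀a
        have hgzn : g (z₀ + n * p) = 0 := (hshare _).mpr hgkn
        have hΦn : Φ (z₀ + n * p) = -(A / v^k * c) := by
          rw [hΦ]
          simp only
          rw [Complex.exp_add, hexpw, hevp, hgzn]
          ring
        have := hP (z₀ + n * p)
        rw [hΦn] at this
        rw [Polynomial.IsRoot, hP', Polynomial.eval_add, Polynomial.eval_C, ← this]
        ring
      have hinj : Function.Injective (fun n : ℕ => z₀ + n * p) := by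
        intro m n hmn
        simp only [add_right_injective] at hmn
        have : (m:ℂ) * p = n * p := by
          have := hmn
          simpa using this
        have : (m:ℂ) = n := mul_right_cancel₀ hpne this
        exact_mod_cast this
      have hInf : {x : ℂ | P'.IsRoot x}.Infinite :=
        Set.infinite_of_injective_forall_mem hinj hroot
      exact hInf (Polynomial.finite_setOf_isRoot hP'ne)
  · -- Case A : g has no zero
    push_neg at hzero
    obtain ⟨h, hhd, hgh⟩ := exists_log g hg hzero
    have hre : ∀ z : ℂ, (h z).re ≤ Real.log C + msq (‖z‖ + 0) := by
      intro z
      have hnorm : Real.exp ((h z).re) = ‖g z‖ := by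
        rw [hgh z, Complex.norm_exp]
      have := Real.log_le_log (Real.exp_pos _) (hnorm ▸ hgC z)
      rw [Real.log_exp, Real.log_mul (ne_of_gt hC) (Real.exp_ne_zero _),
        Real.log_exp] at this
      simpa using this
    obtain ⟨u, v, huv⟩ := affine_of_re_growth hhd (Real.log C) 0 le_rfl hre
    have hgform : g = fun z => Complex.exp (u + v * z) := by
      funext z
      rw [hgh z, huv z]
    by_cases hv : v = 0
    · exact hnc ⟨Complex.exp u, fun z => by rw [hgform]; simp [hv]⟩
    · have hvk : (v:ℂ)^k ≠ 0 := pow_ne_zero _ hv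
      set z1 : ℂ := (Complex.log (b / v^k) - u) / v with hz1
      have hval : u + v * z1 = Complex.log (b / v^k) := by
        rw [hz1]; field_simp; ring
      have : iteratedDeriv k g z1 = b := by
        rw [hgform, iteratedDeriv_exp_affine u v k]
        simp only
        rw [hval, Complex.exp_log (div_ne_zero hb hvk)]
        field_simp
      exact homit z1 this
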